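/- arXiv:0708.0331 — 6 statements merged into one kernel-verified Lean document; each statement's English description precedes it below -/
import Mathlib

section
/- Let 𝕂 be ℝ or ℂ, let m ≥ 1 be an integer, let F be an m-dimensional normed space over 𝕂, and let d ≥ 1 be a real number. Suppose there exists a linear isomorphism T : ℓ₂^m → F with ‖T‖ ≤ d and ‖T⁻¹‖ = 1. Then there exist vectors x₁, …, x_m in F and continuous linear functionals φ₁, …, φ_m in F′ with ‖φ_i‖ = 1 for every i, such that: (i) for each i, φ_i(x_i) is a real number satisfying 1 ≤ φ_i(x_i) ≤ d; (ii) φ_j(x_k) = 0 whenever j ≠ k; (iii) 1 ≤ min_{1≤k≤m} ‖x_k‖ ≤ max_{1≤k≤m} ‖x_k‖ = ‖x₁‖ ≤ d; and (iv) for every real number r ≥ 2, sup{ (Σ_{k=1}^m |φ(x_k)|^r)^{1/r} : φ ∈ F′, ‖φ‖ ≤ 1 } = ‖x₁‖. -/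
open Module

set_option maxHeartbeats 1000000 in
/-- Lemma 1 of the paper. If `F` is an `m`-dimensional normed space
over `𝕂 = ℝ` or `ℂ` and there is a linear isomorphism `T : ℓ₂^m → F` with
`‖T‖ ≤ d` and `‖T⁻¹‖ = 1` (`d ≥ 1`), then there exist `x₁, …, x_m` in `F` and
norm-one functionals `φ₁, …, φ_m` in `F′` such that `1 ≤ φ_i(x_i) ≤ d` (real values),
`φ_j(x_k) = 0` for `j ≠ k`, `1 ≤ min ‖x_k‖ ≤ max ‖x_k‖ = ‖x₁‖ ≤ d`, and for every
real `r ≥ 2`, `sup { (Σ_k |φ(x_k)|^r)^(1/r) : φ ∈ B_{F′} } = ‖x₁‖`. -/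
theorem stmt_0 {𝕂 : Type*} [RCLike 𝕂] {F : Type*} [NormedAddCommGroup F]
    [NormedSpace 𝕂 F] {m : ℕ} (hm : 0 < m) (hdim : Module.finrank 𝕂 F = m)
    {d : ℝ} (hd : 1 ≤ d) (T : EuclideanSpace 𝕂 (Fin m) ≃L[𝕂] F)
    (hT : ‖(T : EuclideanSpace 𝕂 (Fin m) →L[𝕂] F)‖ ≤ d)
    (hTinv : ‖(T.symm : F →L[𝕂] EuclideanSpace 𝕂 (Fin m))‖ = 1) :
    ∃ (x : Fin m → F) (φ : Fin m → (F →L[𝕂] 𝕂)),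
      (∀ i, ‖φ i‖ = 1) ∧
      (∀ i, ∃ c : ℝ, 1 ≤ c ∧ c ≤ d ∧ φ i (x i) = (c : 𝕂)) ∧
      (∀ j k, j ≠ k → φ j (x k) = 0) ∧
      (∀ k, 1 ≤ ‖x k‖) ∧ (∀ k, ‖x k‖ ≤ ‖x ⟨0, hm⟩‖) ∧ ‖x ⟨0, hm⟩‖ ≤ d ∧
      (∀ r : ℝ, 2 ≤ r →
        sSup {s : ℝ | ∃ φ' : F →L[𝕂] 𝕂, ‖φ'‖ ≤ 1 ∧
          s = (∑ k, ‖φ' (x k)‖ ^ r) ^ (1 / r)} = ‖x ⟨0, hm⟩‖) := by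
  classical
  set E := EuclideanSpace 𝕂 (Fin m) with hEdef
  haveI : Nontrivial E :=
    Module.nontrivial_of_finrank_pos (R := 𝕂) (by rw [finrank_euclideanSpace]; simpa using hm)
  -- maximizer on the sphere
  obtain ⟨u, hu_mem, hu_max⟩ :=
    (isCompact_sphere (0 : E) 1).exists_isMaxOn
      (NormedSpace.sphere_nonempty.mpr zero_le_one)
      ((continuous_norm.comp (T : E →L[𝕂] F).continuous).continuousOn)
  have hu1 : ‖u‖ = 1 := by simpa using hu_mem
  have hmax : ∀ v : E, ‖T v‖ ≤ ‖T u‖ * ‖v‖ := by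
    intro v
    rcases eq_or_ne v 0 with rfl | hv
    · simp
    · have hvpos : (0:ℝ) < ‖v‖ := norm_pos_iff.mpr hv
      have hw : ((‖v‖⁻¹ : ℝ) : 𝕂) • v ∈ Metric.sphere (0 : E) 1 := by
        simp [norm_smul, RCLike.norm_ofReal, abs_of_pos (inv_pos.mpr hvpos),
          inv_mul_cancel₀ hvpos.ne']
      have := hu_max hw
      simp only [Set.mem_setOf_eq, Function.comp_apply, map_smul, norm_smul, RCLike.norm_ofReal,
        abs_of_pos (inv_pos.mpr hvpos)] at this
      calc ‖T v‖ = ‖v‖ * (‖v‖⁻¹ * ‖T v‖) := by field_simp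
      _ ≤ ‖v‖ * ‖T u‖ := by exact mul_le_mul_of_nonneg_left this hvpos.le
      _ = ‖T u‖ * ‖v‖ := mul_comm _ _
  -- orthonormal basis extending u
  set i₀ : Fin m := ⟨0, hm⟩ with hi₀
  have hcard : Module.finrank 𝕂 E = Fintype.card (Fin m) :=
    finrank_euclideanSpace (𝕜 := 𝕂) (ι := Fin m)
  have horth : Orthonormal 𝕂 (({i₀} : Set (Fin m)).restrict (fun _ => u)) := by
    constructor
    · intro i; exact hu1
    · intro i j hij
      exact absurd (Subtype.ext (i.2.trans j.2.symm)) hij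
  obtain ⟨b, hb⟩ := horth.exists_orthonormalBasis_extension_of_card_eq hcard
  have hb0 : b i₀ = u := hb i₀ rfl
  -- the vectors and functionals
  set x : Fin m → F := fun k => T (b k) with hxdef
  set ψ : Fin m → (F →L[𝕂] 𝕂) :=
    fun k => (innerSL 𝕂 (b k)).comp (T.symm : F →L[𝕂] E) with hψdef
  have hψx : ∀ k j, ψ k (x j) = if k = j then 1 else 0 := by
    intro k j
    have : (T.symm : F →L[𝕂] E) (x j) = b j := T.symm_apply_apply (b j)
    simp only [hψdef, ContinuousLinearMap.comp_apply, this, innerSL_apply_apply]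
    exact orthonormal_iff_ite.mp b.orthonormal k j
  have hbnorm : ∀ k, ‖b k‖ = 1 := fun k => b.orthonormal.1 k
  have hψle : ∀ k, ‖ψ k‖ ≤ 1 := by
    intro k
    calc ‖ψ k‖ ≤ ‖innerSL 𝕂 (b k)‖ * ‖(T.symm : F →L[𝕂] E)‖ :=
          ContinuousLinearMap.opNorm_comp_le _ _
    _ = 1 := by rw [hTinv, innerSL_apply_norm, hbnorm k, mul_one]
  have hψpos : ∀ k, (0:ℝ) < ‖ψ k‖ := by
    intro k
    have h1 : ‖ψ k (x k)‖ = 1 := by rw [hψx k k, if_pos rfl]; simp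
    have h2 := (ψ k).le_opNorm (x k)
    rw [h1] at h2
    nlinarith [norm_nonneg (x k), norm_nonneg (ψ k)]
  -- normalized functionals
  set φ : Fin m → (F →L[𝕂] 𝕂) := fun k => ((‖ψ k‖⁻¹ : ℝ) : 𝕂) • ψ k with hφdef
  have hφnorm : ∀ k, ‖φ k‖ = 1 := by
    intro k
    have hrfl : φ k = ((‖ψ k‖⁻¹ : ℝ) : 𝕂) • ψ k := rfl
    rw [hrfl, norm_smul ((‖ψ k‖⁻¹ : ℝ) : 𝕂) (ψ k), RCLike.norm_ofReal, abs_of_pos (inv_pos.mpr (hψpos k))]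
    exact inv_mul_cancel₀ (hψpos k).ne'
  have hφx : ∀ k j, φ k (x j) = ((‖ψ k‖⁻¹ : ℝ) : 𝕂) * (if k = j then 1 else 0) := by
    intro k j
    rw [hφdef]
    simp only [ContinuousLinearMap.smul_apply, smul_eq_mul, hψx k j]
  -- norms of the x's
  have hx1norm : ∀ k, 1 ≤ ‖x k‖ := by
    intro k
    have h1 : ‖(T.symm : F →L[𝕂] E) (x k)‖ ≤ ‖(T.symm : F →L[𝕂] E)‖ * ‖x k‖ :=
      ContinuousLinearMap.le_opNorm _ _
    have heq : (T.symm : F →L[𝕂] E) (x k) = b k := T.symm_apply_apply (b k)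
    rwa [heq, hbnorm k, hTinv, one_mul] at h1
  have hM0 : (0:ℝ) ≤ ‖x i₀‖ := norm_nonneg _
  have hxmax : ∀ k, ‖x k‖ ≤ ‖x i₀‖ := by
    intro k
    have h := hmax (b k)
    rw [hbnorm k, mul_one] at h
    show ‖T (b k)‖ ≤ ‖T (b i₀)‖
    rw [hb0]; exact h
  have hxd : ‖x i₀‖ ≤ d := by
    have h1 : ‖T u‖ ≤ ‖(T : E →L[𝕂] F)‖ * ‖u‖ := (T : E →L[𝕂] F).le_opNorm u
    rw [hu1, mul_one] at h1
    have h2 : ‖x i₀‖ = ‖T u‖ := by show ‖T (b i₀)‖ = _; rw [hb0]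
    rw [h2]; exact h1.trans hT
  -- key ℓ² bound
  have hkey : ∀ φ' : F →L[𝕂] 𝕂, ‖φ'‖ ≤ 1 →
      ∑ k, ‖φ' (x k)‖ ^ 2 ≤ ‖x i₀‖ ^ 2 := by
    intro φ' hφ'
    set g : E →L[𝕂] 𝕂 := φ'.comp (T : E →L[𝕂] F) with hg
    have hgnorm : ‖g‖ ≤ ‖x i₀‖ := by
      refine ContinuousLinearMap.opNorm_le_bound _ hM0 (fun w => ?_)
      have h1 : ‖g w‖ ≤ ‖φ'‖ * ‖T w‖ := φ'.le_opNorm (T w)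
      have h2 : ‖φ'‖ * ‖T w‖ ≤ 1 * (‖T u‖ * ‖w‖) :=
        mul_le_mul hφ' (hmax w) (norm_nonneg _) zero_le_one
      have h3 : ‖x i₀‖ = ‖T u‖ := by show ‖T (b i₀)‖ = _; rw [hb0]
      rw [one_mul] at h2
      rw [h3]
      exact h1.trans h2
    set v := (InnerProductSpace.toDual 𝕂 E).symm g with hv
    have hvnorm : ‖v‖ = ‖g‖ := LinearIsometryEquiv.norm_map _ g
    have hvg : ∀ w : E, ‖g w‖ = ‖(inner 𝕂 w v : 𝕂)‖ := by
      intro w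
      rw [← InnerProductSpace.toDual_symm_apply (𝕜 := 𝕂) (E := E) (x := w) (y := g)]
      exact (norm_inner_symm _ _).symm
    have hsum : ∀ k, ‖φ' (x k)‖ = ‖(inner 𝕂 (b k) v : 𝕂)‖ := by
      intro k
      have : φ' (x k) = g (b k) := by
        simp [hg, hxdef, ContinuousLinearMap.comp_apply]
      rw [this, hvg (b k)]
    calc ∑ k, ‖φ' (x k)‖ ^ 2 = ∑ k, ‖(inner 𝕂 (b k) v : 𝕂)‖ ^ 2 := by
          exact Finset.sum_congr rfl fun k _ => by rw [hsum k]
    _ ≤ ‖v‖ ^ 2 := b.orthonormal.sum_inner_products_le v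
    _ = ‖g‖ ^ 2 := by rw [hvnorm]
    _ ≤ ‖x i₀‖ ^ 2 := by
          have := pow_le_pow_left₀ (norm_nonneg g) hgnorm 2
          exact this
  -- upper bound for general r ≥ 2
  have hub : ∀ r : ℝ, 2 ≤ r → ∀ φ' : F →L[𝕂] 𝕂, ‖φ'‖ ≤ 1 →
      (∑ k, ‖φ' (x k)‖ ^ r) ^ (1/r) ≤ ‖x i₀‖ := by
    intro r hr φ' hφ'
    have hr0 : (0:ℝ) < r := lt_of_lt_of_le two_pos hr
    have hsum_nonneg : (0:ℝ) ≤ ∑ k, ‖φ' (x k)‖ ^ 2 :=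
      Finset.sum_nonneg fun k _ => sq_nonneg _
    set S := Real.sqrt (∑ k, ‖φ' (x k)‖ ^ 2) with hSdef
    have hS2 : S ^ 2 = ∑ k, ‖φ' (x k)‖ ^ 2 := Real.sq_sqrt hsum_nonneg
    have hSnn : (0:ℝ) ≤ S := Real.sqrt_nonneg _
    have hSM : S ≤ ‖x i₀‖ := by
      have h1 : S ≤ Real.sqrt (‖x i₀‖ ^ 2) := Real.sqrt_le_sqrt (hkey φ' hφ')
      rwa [Real.sqrt_sq hM0] at h1
    have hak : ∀ k, ‖φ' (x k)‖ ≤ S := by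
      intro k
      have h1 : ‖φ' (x k)‖ ^ 2 ≤ ∑ j, ‖φ' (x j)‖ ^ 2 :=
        Finset.single_le_sum (f := fun j => ‖φ' (x j)‖ ^ 2)
          (fun j _ => sq_nonneg _) (Finset.mem_univ k)
      have h2 := Real.sqrt_le_sqrt h1
      rwa [Real.sqrt_sq (norm_nonneg _)] at h2
    have hterm : ∀ k, ‖φ' (x k)‖ ^ r ≤ S ^ (r - 2) * ‖φ' (x k)‖ ^ 2 := by
      intro k
      rcases eq_or_lt_of_le (norm_nonneg (φ' (x k))) with h0 | h0
      · rw [← h0, Real.zero_rpow hr0.ne']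
        positivity
      · have e1 : ‖φ' (x k)‖ ^ r = ‖φ' (x k)‖ ^ (r - 2) * ‖φ' (x k)‖ ^ 2 := by
          rw [← Real.rpow_natCast (‖φ' (x k)‖) 2, ← Real.rpow_add h0]
          norm_num
        rw [e1]
        have e2 : ‖φ' (x k)‖ ^ (r - 2) ≤ S ^ (r - 2) :=
          Real.rpow_le_rpow h0.le (hak k) (by linarith)
        exact mul_le_mul_of_nonneg_right e2 (sq_nonneg _)
    have hsumr : ∑ k, ‖φ' (x k)‖ ^ r ≤ S ^ r := by
      calc ∑ k, ‖φ' (x k)‖ ^ r ≤ ∑ k, S ^ (r - 2) * ‖φ' (x k)‖ ^ 2 :=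
            Finset.sum_le_sum fun k _ => hterm k
      _ = S ^ (r - 2) * S ^ 2 := by rw [← Finset.mul_sum, hS2]
      _ = S ^ r := by
          rcases eq_or_lt_of_le hSnn with h0 | h0
          · rcases eq_or_lt_of_le hr with h2 | h2
            · rw [← h0, ← h2]; norm_num
            · rw [← h0, Real.zero_rpow (by linarith : r - 2 ≠ 0),
                Real.zero_rpow hr0.ne', zero_mul]
          · rw [← Real.rpow_natCast S 2, ← Real.rpow_add h0]
            norm_num
    have hfin : (∑ k, ‖φ' (x k)‖ ^ r) ^ (1/r) ≤ (‖x i₀‖ ^ r) ^ (1/r) := by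
      refine Real.rpow_le_rpow (Finset.sum_nonneg fun k _ =>
        Real.rpow_nonneg (norm_nonneg _) r) ?_ (by positivity)
      exact hsumr.trans (Real.rpow_le_rpow hSnn hSM hr0.le)
    rwa [← Real.rpow_mul hM0, mul_one_div_cancel hr0.ne', Real.rpow_one] at hfin
  -- assemble
  have hx0ne : x i₀ ≠ 0 := by
    intro h
    have := hx1norm i₀
    rw [h, norm_zero] at this
    linarith
  refine ⟨x, φ, hφnorm, ?_, ?_, hx1norm, hxmax, hxd, ?_⟩
  · intro i
    refine ⟨‖ψ i‖⁻¹, ?_, ?_, ?_⟩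
    · calc (1:ℝ) = ‖ψ i‖⁻¹ * ‖ψ i‖ := (inv_mul_cancel₀ (hψpos i).ne').symm
      _ ≤ ‖ψ i‖⁻¹ * 1 := mul_le_mul_of_nonneg_left (hψle i) (inv_pos.mpr (hψpos i)).le
      _ = ‖ψ i‖⁻¹ := mul_one _
    · have hp := hψpos i
      have h1 : (1:ℝ) ≤ ‖ψ i‖ * ‖x i‖ := by
        have hle := (ψ i).le_opNorm (x i)
        have he : ‖ψ i (x i)‖ = 1 := by rw [hψx i i, if_pos rfl]; simp
        rwa [he] at hle
      calc ‖ψ i‖⁻¹ = ‖ψ i‖⁻¹ * 1 := (mul_one _).symm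
      _ ≤ ‖ψ i‖⁻¹ * (‖ψ i‖ * ‖x i‖) := mul_le_mul_of_nonneg_left h1 (inv_pos.mpr hp).le
      _ = ‖x i‖ := by field_simp
      _ ≤ d := (hxmax i).trans hxd
    · rw [hφx i i, if_pos rfl, mul_one]
  · intro j k hjk
    rw [hφx j k, if_neg hjk, mul_zero]
  · intro r hr
    have hr0 : (0:ℝ) < r := lt_of_lt_of_le two_pos hr
    obtain ⟨g, hg1, hgx⟩ := exists_dual_vector 𝕂 (x i₀) (norm_ne_zero_iff.mpr hx0ne)
    have hgM : ‖g (x i₀)‖ = ‖x i₀‖ := by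
      rw [hgx]
      simp [RCLike.norm_ofReal, abs_of_nonneg hM0]
    have hle := hub r hr g hg1.le
    have hge : ‖x i₀‖ ≤ (∑ k, ‖g (x k)‖ ^ r) ^ (1/r) := by
      have h1 : ‖x i₀‖ ^ r ≤ ∑ k, ‖g (x k)‖ ^ r := by
        rw [← hgM]
        exact Finset.single_le_sum (f := fun k => ‖g (x k)‖ ^ r)
          (fun k _ => Real.rpow_nonneg (norm_nonneg _) r) (Finset.mem_univ i₀)
      have h2 : (‖x i₀‖ ^ r) ^ (1/r) ≤ (∑ k, ‖g (x k)‖ ^ r) ^ (1/r) :=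
        Real.rpow_le_rpow (Real.rpow_nonneg hM0 r) h1 (by positivity)
      rwa [← Real.rpow_mul hM0, mul_one_div_cancel hr0.ne', Real.rpow_one] at h2
    have hmemM : ‖x i₀‖ ∈ {s : ℝ | ∃ φ' : F →L[𝕂] 𝕂, ‖φ'‖ ≤ 1 ∧
        s = (∑ k, ‖φ' (x k)‖ ^ r) ^ (1 / r)} :=
      ⟨g, le_of_eq hg1, le_antisymm hge hle⟩
    refine le_antisymm (csSup_le ⟨_, hmemM⟩ ?_) (le_csSup ⟨‖x i₀‖, ?_⟩ hmemM)
    · rintro s ⟨φ', hφ', rfl⟩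
      exact hub r hr φ' hφ'
    · rintro s ⟨φ', hφ', rfl⟩
      exact hub r hr φ' hφ'
end

section
/- Let 𝕂 be ℝ or ℂ, let m ≥ 1 be an integer, let F be an m-dimensional normed space over 𝕂, and let d ≥ 1 be a real number. Suppose there exists a linear isomorphism T : ℓ₂^m → F with ‖T‖ ≤ d and ‖T⁻¹‖ = 1. Then there exist functionals φ₁, …, φ_m in F′ with ‖φ_j‖ = 1 for every j, such that the vectors T*(φ₁), …, T*(φ_m) in ℓ₂^m are pairwise orthogonal with respect to the standard inner product of ℓ₂^m and satisfy 1 ≤ ‖T*(φ_j)‖₂ ≤ d for every j, where T* : F′ → (ℓ₂^m)′ ≅ ℓ₂^m denotes the adjoint of T. -/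
/-- First step of the proof of Lemma 1. Under the same hypotheses as
Lemma 1, there exist norm-one functionals `φ₁, …, φ_m` in `F′` whose images under
the adjoint `T* : F′ → (ℓ₂^m)′ ≅ ℓ₂^m` (the identification being via the standard
inner product: `T*(φ_j)` is the vector `v j` with `φ_j(T w) = ⟪v j, w⟫` for all `w`)
are pairwise orthogonal and satisfy `1 ≤ ‖T*(φ_j)‖₂ ≤ d` for every `j`. -/
theorem stmt_1 {𝕂 : Type*} [RCLike 𝕂] {F : Type*} [NormedAddCommGroup F]
    [NormedSpace 𝕂 F] {m : ℕ} (hm : 0 < m) (hdim : Module.finrank 𝕂 F = m)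
    {d : ℝ} (hd : 1 ≤ d) (T : EuclideanSpace 𝕂 (Fin m) ≃L[𝕂] F)
    (hT : ‖(T : EuclideanSpace 𝕂 (Fin m) →L[𝕂] F)‖ ≤ d)
    (hTinv : ‖(T.symm : F →L[𝕂] EuclideanSpace 𝕂 (Fin m))‖ = 1) :
    ∃ (φ : Fin m → (F →L[𝕂] 𝕂)) (v : Fin m → EuclideanSpace 𝕂 (Fin m)),
      (∀ j, ‖φ j‖ = 1) ∧
      (∀ j w, φ j (T w) = inner 𝕂 (v j) w) ∧
      (∀ j k, j ≠ k → (inner 𝕂 (v j) (v k) : 𝕂) = 0) ∧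
      (∀ j, 1 ≤ ‖v j‖ ∧ ‖v j‖ ≤ d) := by
  have hd0 : (0:ℝ) < d := lt_of_lt_of_le one_pos hd
  set e : Fin m → EuclideanSpace 𝕂 (Fin m) := fun j => EuclideanSpace.single j (1:𝕂) with he
  have hne : ∀ j, ‖e j‖ = 1 := by
    intro j; simp [he, EuclideanSpace.norm_single]
  set ψ : Fin m → (F →L[𝕂] 𝕂) := fun j =>
    (innerSL 𝕂 (e j)).comp (T.symm : F →L[𝕂] EuclideanSpace 𝕂 (Fin m)) with hψ
  have hψapp : ∀ j w, ψ j (T w) = inner 𝕂 (e j) w := by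
    intro j w; simp [hψ]
  set c : Fin m → ℝ := fun j => ‖ψ j‖ with hc
  have hc_le : ∀ j, c j ≤ 1 := by
    intro j
    calc c j ≤ ‖innerSL 𝕂 (e j)‖ * ‖(T.symm : F →L[𝕂] EuclideanSpace 𝕂 (Fin m))‖ :=
          ContinuousLinearMap.opNorm_comp_le _ _
      _ ≤ 1 * 1 := by
          apply mul_le_mul _ (le_of_eq hTinv) (norm_nonneg _) zero_le_one
          rw [innerSL_apply_norm, hne]
      _ = 1 := one_mul 1
  have hc_ge : ∀ j, 1 / d ≤ c j := by
    intro j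
    have h1 : (1:ℝ) = ‖ψ j (T (e j))‖ := by
      rw [hψapp]
      have : (inner 𝕂 (e j) (e j) : 𝕂) = 1 := by
        simp [he, EuclideanSpace.inner_single_left, EuclideanSpace.single_apply]
      rw [this]; simp
    have h2 : ‖ψ j (T (e j))‖ ≤ c j * (d * 1) := by
      calc ‖ψ j (T (e j))‖ ≤ c j * ‖T (e j)‖ := (ψ j).le_opNorm _
        _ ≤ c j * (d * 1) := by
            apply mul_le_mul_of_nonneg_left _ (norm_nonneg _)
            calc ‖T (e j)‖ ≤ ‖(T : EuclideanSpace 𝕂 (Fin m) →L[𝕂] F)‖ * ‖e j‖ :=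
                  (T : EuclideanSpace 𝕂 (Fin m) →L[𝕂] F).le_opNorm _
              _ ≤ d * 1 := mul_le_mul hT (le_of_eq (hne j)) (norm_nonneg _) (le_of_lt hd0)
    rw [mul_one] at h2
    rw [div_le_iff₀ hd0, mul_comm]
    linarith [h1 ▸ h2]
  have hc_pos : ∀ j, 0 < c j := fun j =>
    lt_of_lt_of_le (by positivity) (hc_ge j)
  refine ⟨fun j => ((c j : 𝕂))⁻¹ • ψ j, fun j => ((c j : 𝕂))⁻¹ • e j, ?_, ?_, ?_, ?_⟩
  · intro j
    show ‖((c j : 𝕂))⁻¹ • ψ j‖ = 1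
    rw [norm_smul ((c j : 𝕂))⁻¹ (ψ j), norm_inv, RCLike.norm_ofReal, abs_of_pos (hc_pos j)]
    exact inv_mul_cancel₀ (ne_of_gt (hc_pos j))
  · intro j w
    show (((c j : 𝕂))⁻¹ • ψ j) (T w) = inner 𝕂 (((c j : 𝕂))⁻¹ • e j) w
    rw [inner_smul_left, map_inv₀, RCLike.conj_ofReal, ContinuousLinearMap.smul_apply,
      hψapp, smul_eq_mul]
  · intro j k hjk
    show (inner 𝕂 (((c j : 𝕂))⁻¹ • e j) (((c k : 𝕂))⁻¹ • e k) : 𝕂) = 0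
    rw [inner_smul_left, inner_smul_right]
    have : (inner 𝕂 (e j) (e k) : 𝕂) = 0 := by
      simp [he, EuclideanSpace.inner_single_left, EuclideanSpace.single_apply, hjk, Ne.symm hjk]
    rw [this, mul_zero, mul_zero]
  · intro j
    show 1 ≤ ‖((c j : 𝕂))⁻¹ • e j‖ ∧ ‖((c j : 𝕂))⁻¹ • e j‖ ≤ d
    rw [norm_smul, norm_inv, RCLike.norm_ofReal, abs_of_pos (hc_pos j), hne, mul_one]
    constructor
    · exact one_le_inv_iff₀.mpr ⟨hc_pos j, hc_le j⟩
    · rw [inv_le_comm₀ (hc_pos j) hd0]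
      have := hc_ge j; rw [one_div] at this; exact this
end

section
/- Let 𝕂 be ℝ or ℂ, let m ≥ 1 be an integer, and let F be an m-dimensional normed space over 𝕂. Then there exist vectors x₁, …, x_m in F with 1 ≤ ‖x_k‖ ≤ ‖x₁‖ for every k, such that for every real number r ≥ 2, sup{ (Σ_{k=1}^m |φ(x_k)|^r)^{1/r} : φ ∈ F′, ‖φ‖ ≤ 1 } = ‖x₁‖. -/
set_option maxHeartbeats 1000000
open Finset

/-- Consequence of Lemma 1 without reference to `T`. If `F` is an
`m`-dimensional normed space over `𝕂 = ℝ` or `ℂ` (`m ≥ 1`), then there exist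
`x₁, …, x_m` in `F` with `1 ≤ ‖x_k‖ ≤ ‖x₁‖` for all `k`, such that for every real
`r ≥ 2`, `sup { (Σ_k |φ(x_k)|^r)^(1/r) : φ ∈ B_{F′} } = ‖x₁‖`. -/
theorem stmt_2 {𝕂 : Type*} [RCLike 𝕂] {F : Type*} [NormedAddCommGroup F]
    [NormedSpace 𝕂 F] {m : ℕ} (hm : 0 < m) (hdim : Module.finrank 𝕂 F = m) :
    ∃ x : Fin m → F,
      (∀ k, 1 ≤ ‖x k‖) ∧ (∀ k, ‖x k‖ ≤ ‖x ⟨0, hm⟩‖) ∧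
      (∀ r : ℝ, 2 ≤ r →
        sSup {s : ℝ | ∃ φ : F →L[𝕂] 𝕂, ‖φ‖ ≤ 1 ∧
          s = (∑ k, ‖φ (x k)‖ ^ r) ^ (1 / r)} = ‖x ⟨0, hm⟩‖) := by
  classical
  have hfd : FiniteDimensional 𝕂 F := .of_finrank_pos (hdim ▸ hm)
  set i₀ : Fin m := ⟨0, hm⟩ with hi₀
  set E := EuclideanSpace 𝕂 (Fin m) with hEdef
  have hE : Module.finrank 𝕂 E = m := finrank_euclideanSpace_fin
  let b : Module.Basis (Fin m) 𝕂 F := Module.finBasisOfFinrankEq 𝕂 F hdim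
  let Tlin : E ≃ₗ[𝕂] F := (WithLp.linearEquiv 2 𝕂 (Fin m → 𝕂)).trans b.equivFun.symm
  let T : E ≃L[𝕂] F := Tlin.toContinuousLinearEquiv
  -- norm attained at a
  have hsne : (Metric.sphere (0 : E) 1).Nonempty :=
    ⟨EuclideanSpace.single i₀ (1 : 𝕂), by
      rw [mem_sphere_zero_iff_norm]
      exact (EuclideanSpace.norm_single i₀ (1:𝕂)).trans norm_one⟩
  obtain ⟨a, haS, hamax⟩ := (isCompact_sphere (0 : E) 1).exists_isMaxOn hsne
    ((continuous_norm.comp T.continuous).continuousOn)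
  have ha_norm : ‖a‖ = 1 := mem_sphere_zero_iff_norm.mp haS
  have hTmax : ∀ y : E, ‖T y‖ ≤ ‖T a‖ * ‖y‖ := by
    intro y
    rcases eq_or_ne y 0 with rfl | hy
    · simp
    · have hy' : (0:ℝ) < ‖y‖ := norm_pos_iff.mpr hy
      set u : E := ((‖y‖⁻¹ : ℝ) : 𝕂) • y with hu
      have hun : ‖u‖ = 1 := by
        rw [hu, norm_smul, RCLike.norm_ofReal, abs_of_nonneg (inv_nonneg.mpr hy'.le),
          inv_mul_cancel₀ hy'.ne']
      have h1 : ‖T u‖ ≤ ‖T a‖ := hamax (mem_sphere_zero_iff_norm.mpr hun)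
      have h2 : ‖T u‖ = ‖y‖⁻¹ * ‖T y‖ := by
        rw [hu, map_smul, norm_smul, RCLike.norm_ofReal, abs_of_nonneg (inv_nonneg.mpr hy'.le)]
      rw [h2] at h1
      calc ‖T y‖ = ‖y‖ * (‖y‖⁻¹ * ‖T y‖) := by field_simp
        _ ≤ ‖y‖ * ‖T a‖ := by nlinarith
        _ = ‖T a‖ * ‖y‖ := mul_comm _ _
  -- orthonormal basis through a
  have ha_on : Orthonormal 𝕂 (({i₀} : Set (Fin m)).restrict fun _ : Fin m => a) := by
    constructor
    · intro i
      simp [Set.restrict, ha_norm, ← norm_toNNReal]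
    · rintro ⟨i, hi⟩ ⟨j, hj⟩ hij
      exact absurd (Subtype.ext ((Set.mem_singleton_iff.mp hi).trans
        (Set.mem_singleton_iff.mp hj).symm)) hij
  obtain ⟨v, hv⟩ := ha_on.exists_orthonormalBasis_extension_of_card_eq (by simpa using hE)
  have hva : v i₀ = a := hv i₀ rfl
  have hvn : ∀ k, ‖v k‖ = 1 := fun k => v.orthonormal.1 k
  -- the constant
  have hmemu : i₀ ∈ (Finset.univ : Finset (Fin m)) := Finset.mem_univ _
  set c : ℝ := Finset.univ.inf' ⟨i₀, hmemu⟩ (fun k => ‖T (v k)‖) with hcdef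
  have hc_le : ∀ k, c ≤ ‖T (v k)‖ := fun k => Finset.inf'_le _ (Finset.mem_univ k)
  have hc_pos : (0:ℝ) < c := by
    rw [hcdef]; refine (Finset.lt_inf'_iff _).2 ?_
    intro k _
    have hvk : v k ≠ 0 := by
      intro h; have := hvn k; rw [h, norm_zero] at this; norm_num at this
    have : T (v k) ≠ 0 := by
      simp only [ne_eq, ContinuousLinearEquiv.map_eq_zero_iff]
      exact hvk
    exact norm_pos_iff.mpr this
  set x : Fin m → F := fun k => ((c⁻¹ : ℝ) : 𝕂) • T (v k) with hxdef
  have hxn : ∀ k, ‖x k‖ = c⁻¹ * ‖T (v k)‖ := by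
    intro k
    rw [hxdef]
    simp only [norm_smul, RCLike.norm_ofReal, abs_of_nonneg (inv_nonneg.mpr hc_pos.le)]
  have hx0 : ‖x i₀‖ = c⁻¹ * ‖T a‖ := by rw [hxn i₀, hva]
  have h1 : ∀ k, 1 ≤ ‖x k‖ := by
    intro k
    rw [hxn k]
    calc (1:ℝ) = c⁻¹ * c := (inv_mul_cancel₀ hc_pos.ne').symm
      _ ≤ c⁻¹ * ‖T (v k)‖ := by
        have := hc_le k
        have h0 : (0:ℝ) ≤ c⁻¹ := inv_nonneg.mpr hc_pos.le
        nlinarith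
  have h2 : ∀ k, ‖x k‖ ≤ ‖x i₀‖ := by
    intro k
    rw [hxn k, hx0]
    have hk : ‖T (v k)‖ ≤ ‖T a‖ := by
      have := hTmax (v k); rw [hvn k, mul_one] at this; exact this
    have h0 : (0:ℝ) ≤ c⁻¹ := inv_nonneg.mpr hc_pos.le
    nlinarith
  -- key ℓ² bound
  have key : ∀ φ : F →L[𝕂] 𝕂, ‖φ‖ ≤ 1 → ∑ k, ‖φ (x k)‖ ^ (2:ℕ) ≤ ‖x i₀‖ ^ (2:ℕ) := by
    intro φ hφ
    set ψ : E →L[𝕂] 𝕂 := φ.comp (T : E →L[𝕂] F) with hψdef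
    have hφx : ∀ k, ‖φ (x k)‖ = c⁻¹ * ‖ψ (v k)‖ := by
      intro k
      rw [hxdef]
      simp only [map_smul, norm_smul, RCLike.norm_ofReal,
        abs_of_nonneg (inv_nonneg.mpr hc_pos.le)]
      rfl
    have hψnorm : ‖ψ‖ ≤ ‖T a‖ := by
      have hTop : ‖(T : E →L[𝕂] F)‖ ≤ ‖T a‖ :=
        ContinuousLinearMap.opNorm_le_bound _ (norm_nonneg _)
          (fun y => by simpa using hTmax y)
      calc ‖ψ‖ ≤ ‖φ‖ * ‖(T : E →L[𝕂] F)‖ := ContinuousLinearMap.opNorm_comp_le _ _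
        _ ≤ 1 * ‖T a‖ := by
            apply mul_le_mul hφ hTop (norm_nonneg _) zero_le_one
        _ = ‖T a‖ := one_mul _
    -- Parseval
    set w : E := (InnerProductSpace.toDual 𝕂 E).symm ψ with hwdef
    have hw : ∀ y, ψ y = @inner 𝕂 _ _ w y := by
      intro y
      rw [hwdef]
      have := (InnerProductSpace.toDual 𝕂 E).apply_symm_apply ψ
      conv_lhs => rw [← this]
      rfl
    have hwn : ‖w‖ = ‖ψ‖ := by
      rw [hwdef]; exact LinearIsometryEquiv.norm_map _ ψ
    have hpars : ∑ k, ‖ψ (v k)‖ ^ (2:ℕ) = ‖w‖ ^ (2:ℕ) := by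
      have h1' : ∀ k, ‖ψ (v k)‖ = ‖v.repr w k‖ := by
        intro k
        rw [hw (v k), norm_inner_symm, ← OrthonormalBasis.repr_apply_apply]
      simp_rw [h1']
      rw [← v.repr.norm_map w, EuclideanSpace.norm_eq,
        Real.sq_sqrt (by positivity)]
    calc ∑ k, ‖φ (x k)‖ ^ (2:ℕ)
        = (c⁻¹)^(2:ℕ) * ∑ k, ‖ψ (v k)‖ ^ (2:ℕ) := by
          rw [Finset.mul_sum]; exact Finset.sum_congr rfl fun k _ => by
            rw [hφx k, mul_pow]
      _ = (c⁻¹)^(2:ℕ) * ‖w‖ ^ (2:ℕ) := by rw [hpars]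
      _ ≤ (c⁻¹)^(2:ℕ) * ‖T a‖ ^ (2:ℕ) := by
          have hle : ‖w‖ ≤ ‖T a‖ := hwn ▸ hψnorm
          gcongr
      _ = ‖x i₀‖ ^ (2:ℕ) := by rw [hx0, mul_pow]
  refine ⟨x, h1, h2, ?_⟩
  intro r hr
  have hr0 : (0:ℝ) < r := by linarith
  have hx0pos : (0:ℝ) < ‖x i₀‖ := lt_of_lt_of_le one_pos (h1 i₀)
  have hrpowid : ∀ t : ℝ, 0 ≤ t → (t ^ r) ^ (1/r) = t := by
    intro t ht
    rw [← Real.rpow_mul ht, mul_one_div, div_self hr0.ne', Real.rpow_one]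
  -- upper bound on elements of the set
  have hub : ∀ s ∈ {s : ℝ | ∃ φ : F →L[𝕂] 𝕂, ‖φ‖ ≤ 1 ∧
      s = (∑ k, ‖φ (x k)‖ ^ r) ^ (1 / r)}, s ≤ ‖x i₀‖ := by
    rintro s ⟨φ, hφ, rfl⟩
    have hk2 := key φ hφ
    have hle : ∀ k, ‖φ (x k)‖ ≤ ‖x i₀‖ := by
      intro k
      have hsingle : ‖φ (x k)‖ ^ (2:ℕ) ≤ ‖x i₀‖ ^ (2:ℕ) :=
        le_trans (Finset.single_le_sum (f := fun k => ‖φ (x k)‖ ^ (2:ℕ))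
          (fun i _ => by positivity) (Finset.mem_univ k)) hk2
      nlinarith [norm_nonneg (φ (x k)), hx0pos]
    have hsum : ∑ k, ‖φ (x k)‖ ^ r ≤ ‖x i₀‖ ^ r := by
      have hterm : ∀ k, ‖φ (x k)‖ ^ r ≤ ‖φ (x k)‖ ^ (2:ℝ) * ‖x i₀‖ ^ (r - 2) := by
        intro k
        have hnk : (0:ℝ) ≤ ‖φ (x k)‖ := norm_nonneg _
        have heq : ‖φ (x k)‖ ^ r = ‖φ (x k)‖ ^ (2:ℝ) * ‖φ (x k)‖ ^ (r - 2) := by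
          rw [← Real.rpow_add_of_nonneg hnk (by norm_num) (by linarith)]
          norm_num
        rw [heq]
        apply mul_le_mul_of_nonneg_left _ (Real.rpow_nonneg hnk 2)
        exact Real.rpow_le_rpow hnk (hle k) (by linarith)
      calc ∑ k, ‖φ (x k)‖ ^ r ≤ ∑ k, ‖φ (x k)‖ ^ (2:ℝ) * ‖x i₀‖ ^ (r - 2) :=
            Finset.sum_le_sum fun k _ => hterm k
        _ = (∑ k, ‖φ (x k)‖ ^ (2:ℝ)) * ‖x i₀‖ ^ (r - 2) := by rw [← Finset.sum_mul]
        _ ≤ ‖x i₀‖ ^ (2:ℝ) * ‖x i₀‖ ^ (r - 2) := by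
            apply mul_le_mul_of_nonneg_right _ (Real.rpow_nonneg hx0pos.le _)
            have : ∀ t : ℝ, 0 ≤ t → t ^ (2:ℝ) = t ^ (2:ℕ) := fun t ht => by
              rw [← Real.rpow_natCast t 2]; norm_num
            rw [this _ hx0pos.le]
            calc ∑ k, ‖φ (x k)‖ ^ (2:ℝ) = ∑ k, ‖φ (x k)‖ ^ (2:ℕ) :=
                  Finset.sum_congr rfl fun k _ => this _ (norm_nonneg _)
              _ ≤ _ := hk2
        _ = ‖x i₀‖ ^ r := by
            rw [← Real.rpow_add_of_nonneg hx0pos.le (by norm_num) (by linarith)]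
            norm_num
    calc (∑ k, ‖φ (x k)‖ ^ r) ^ (1/r)
        ≤ (‖x i₀‖ ^ r) ^ (1/r) :=
          Real.rpow_le_rpow (Finset.sum_nonneg fun k _ =>
            Real.rpow_nonneg (norm_nonneg _) r) hsum (by positivity)
      _ = ‖x i₀‖ := hrpowid _ hx0pos.le
  -- lower bound: norming functional
  obtain ⟨g, hg1, hg2⟩ := exists_dual_vector 𝕂 (x i₀) (by
    intro h; rw [h] at hx0pos; simp at hx0pos)
  have hgmem : (∑ k, ‖g (x k)‖ ^ r) ^ (1/r) ∈ {s : ℝ | ∃ φ : F →L[𝕂] 𝕂, ‖φ‖ ≤ 1 ∧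
      s = (∑ k, ‖φ (x k)‖ ^ r) ^ (1 / r)} := ⟨g, le_of_eq hg1, rfl⟩
  have hglb : ‖x i₀‖ ≤ (∑ k, ‖g (x k)‖ ^ r) ^ (1/r) := by
    have hgx : ‖g (x i₀)‖ = ‖x i₀‖ := by
      rw [hg2, RCLike.norm_ofReal, abs_of_nonneg (norm_nonneg _)]
    have hsing : ‖x i₀‖ ^ r ≤ ∑ k, ‖g (x k)‖ ^ r := by
      rw [← hgx]
      exact Finset.single_le_sum (f := fun k => ‖g (x k)‖ ^ r)
        (fun i _ => Real.rpow_nonneg (norm_nonneg _) r) (Finset.mem_univ i₀)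
    calc ‖x i₀‖ = (‖x i₀‖ ^ r) ^ (1/r) := (hrpowid _ hx0pos.le).symm
      _ ≤ _ := Real.rpow_le_rpow (Real.rpow_nonneg hx0pos.le r) hsing (by positivity)
  apply le_antisymm
  · exact csSup_le ⟨_, hgmem⟩ hub
  · exact le_trans hglb (le_csSup ⟨‖x i₀‖, hub⟩ hgmem)
end

section
/- Let 𝕂 be ℝ or ℂ, let E be a normed space over 𝕂 of dimension at least 2, and let n ≥ 2 be an integer. Then there exist vectors x₁, x₂ in E with 1 ≤ ‖x₂‖ ≤ ‖x₁‖ such that sup{ |φ(x₁)|^n + |φ(x₂)|^n : φ ∈ E′, ‖φ‖ ≤ 1 } = ‖x₁‖^n. -/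
lemma rot {𝕂 : Type*} [RCLike 𝕂] (α β α₀ β₀ : 𝕂) :
    ‖α*α₀ - β*(starRingEnd 𝕂 β₀)‖^2 + ‖α*β₀ + β*(starRingEnd 𝕂 α₀)‖^2
      = (‖α‖^2+‖β‖^2)*(‖α₀‖^2+‖β₀‖^2) := by
  have key : ∀ z : 𝕂, (‖z‖:𝕂)^2 = z * (starRingEnd 𝕂 z) := by
    intro z; rw [RCLike.mul_conj]
  have : ((‖α*α₀ - β*(starRingEnd 𝕂 β₀)‖^2 + ‖α*β₀ + β*(starRingEnd 𝕂 α₀)‖^2 : ℝ) : 𝕂)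
      = ((((‖α‖^2+‖β‖^2)*(‖α₀‖^2+‖β₀‖^2) : ℝ)) : 𝕂) := by
    push_cast
    rw [key, key, key, key, key, key]
    simp only [map_sub, map_add, map_mul, RCLike.conj_conj]
    ring
  exact_mod_cast this

lemma pow_ineq {a b t : ℝ} {n : ℕ} (ha : 0 ≤ a) (hb : 0 ≤ b) (hb1 : b ≤ 1)
    (ht : 1 ≤ t) (hq : a^2 + b^2 ≤ t^2) (hn : 2 ≤ n) : a^n + b^n ≤ t^n := by
  obtain ⟨k, rfl⟩ := Nat.exists_eq_add_of_le hn
  have hat : a ≤ t := by nlinarith [sq_nonneg b]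
  have h1 : b^(2+k) ≤ b^2 := pow_le_pow_of_le_one hb hb1 (by omega)
  have h2 : a^k ≤ t^k := pow_le_pow_left₀ ha hat k
  have h3 : (1:ℝ) ≤ t^k := one_le_pow₀ ht
  have key : a^(2+k) + t^2 ≤ t^(2+k) + a^2 := by
    have e1 : a^(2+k) = a^2 * a^k := by ring
    have e2 : t^(2+k) = t^2 * t^k := by ring
    nlinarith [mul_nonneg (sub_nonneg.2 (pow_le_pow_left₀ ha hat 2)) (sub_nonneg.2 h3),
      mul_nonneg (sq_nonneg a) (sub_nonneg.2 h2)]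
  nlinarith

lemma scal {𝕂 : Type*} [RCLike 𝕂] (z w : 𝕂) (r : ℝ)
    (hr : r^2 = ‖z‖^2 + ‖w‖^2) (hrne : ((r:ℝ):𝕂) ≠ 0) :
    (starRingEnd 𝕂 z / ((r:ℝ):𝕂)) * z + (starRingEnd 𝕂 w / ((r:ℝ):𝕂)) * w = ((r:ℝ):𝕂) := by
  rw [div_mul_eq_mul_div, div_mul_eq_mul_div, ← add_div]
  rw [RCLike.conj_mul, RCLike.conj_mul]
  rw [div_eq_iff hrne]
  rw [← RCLike.ofReal_pow, ← RCLike.ofReal_pow, ← RCLike.ofReal_add, ← hr]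
  push_cast
  ring

/-- Key step in the proof of Theorem 2. If `E` is a normed space over
`𝕂 = ℝ` or `ℂ` of dimension at least `2` and `n ≥ 2`, then there exist `x₁, x₂ ∈ E`
with `1 ≤ ‖x₂‖ ≤ ‖x₁‖` such that
`sup { |φ(x₁)|^n + |φ(x₂)|^n : φ ∈ B_{E′} } = ‖x₁‖^n`. -/
theorem stmt_3 {𝕂 : Type*} [RCLike 𝕂] {E : Type*} [NormedAddCommGroup E]
    [NormedSpace 𝕂 E] (hdim : 2 ≤ Module.rank 𝕂 E) {n : ℕ} (hn : 2 ≤ n) :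
    ∃ x₁ x₂ : E, 1 ≤ ‖x₂‖ ∧ ‖x₂‖ ≤ ‖x₁‖ ∧
      sSup {s : ℝ | ∃ φ : E →L[𝕂] 𝕂, ‖φ‖ ≤ 1 ∧
        s = ‖φ x₁‖ ^ n + ‖φ x₂‖ ^ n} = ‖x₁‖ ^ n := by
  classical
  have h1 : (1 : Cardinal) < Module.rank 𝕂 E :=
    lt_of_lt_of_le (by norm_num) hdim
  have hnt : Nontrivial E :=
    rank_pos_iff_nontrivial.1 (lt_trans (by norm_num) h1)
  obtain ⟨u, hu⟩ := exists_ne (0 : E)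
  obtain ⟨v, hli⟩ := exists_linearIndependent_pair_of_one_lt_rank h1 hu
  have hpair : ∀ s t : 𝕂, s • u + t • v = 0 → s = 0 ∧ t = 0 :=
    LinearIndependent.pair_iff.1 hli
  set S : Set (𝕂 × 𝕂) := {p | ‖p.1‖^2 + ‖p.2‖^2 = 1} with hSdef
  have hS_closed : IsClosed S := isClosed_eq (by fun_prop) continuous_const
  have hS_sub : S ⊆ Metric.closedBall 0 1 := by
    intro p hp
    have hp' : ‖p.1‖^2 + ‖p.2‖^2 = 1 := hp
    simp only [Metric.mem_closedBall, dist_zero_right, Prod.norm_def]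
    apply sup_le <;> nlinarith [norm_nonneg p.1, norm_nonneg p.2, sq_nonneg ‖p.1‖, sq_nonneg ‖p.2‖]
  have hS_cpt : IsCompact S :=
    (isCompact_closedBall (0 : 𝕂 × 𝕂) 1).of_isClosed_subset hS_closed hS_sub
  have hS_ne : S.Nonempty := ⟨(1, 0), by simp [hSdef]⟩
  have hf : Continuous fun p : 𝕂 × 𝕂 => ‖p.1 • u + p.2 • v‖ := by fun_prop
  obtain ⟨p₀, hp₀S, hmax⟩ := hS_cpt.exists_isMaxOn hS_ne hf.continuousOn
  have hp₀ : ‖p₀.1‖^2 + ‖p₀.2‖^2 = 1 := hp₀S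
  set α₀ := p₀.1
  set β₀ := p₀.2
  set w₁ : E := α₀ • u + β₀ • v with hw₁def
  set w₂ : E := (-(starRingEnd 𝕂 β₀)) • u + (starRingEnd 𝕂 α₀) • v with hw₂def
  have h2S : ((-(starRingEnd 𝕂 β₀), starRingEnd 𝕂 α₀) : 𝕂 × 𝕂) ∈ S := by
    simp only [hSdef, Set.mem_setOf_eq, norm_neg, RCLike.norm_conj]
    linarith [hp₀]
  have hmax' : ∀ p ∈ S, ‖p.1 • u + p.2 • v‖ ≤ ‖w₁‖ := fun p hp => hmax hp
  have hw₂_ne : w₂ ≠ 0 := by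
    intro h
    obtain ⟨h1', h2'⟩ := hpair _ _ h
    have hb : β₀ = 0 := by
      have := congrArg (starRingEnd 𝕂) h1'
      simpa using this
    have ha : α₀ = 0 := by
      have := congrArg (starRingEnd 𝕂) h2'
      simpa using this
    rw [ha, hb] at hp₀; simp at hp₀
  have hw₂_pos : 0 < ‖w₂‖ := norm_pos_iff.2 hw₂_ne
  have hw₂_le : ‖w₂‖ ≤ ‖w₁‖ := hmax' _ h2S
  set c : ℝ := ‖w₂‖⁻¹ with hcdef
  have hc_pos : 0 < c := inv_pos.2 hw₂_pos
  have hcK : ‖((c:ℝ) : 𝕂)‖ = c := by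
    rw [RCLike.norm_ofReal, abs_of_pos hc_pos]
  set x₁ : E := ((c:ℝ) : 𝕂) • w₁ with hx₁def
  set x₂ : E := ((c:ℝ) : 𝕂) • w₂ with hx₂def
  have hx₂_norm : ‖x₂‖ = 1 := by
    rw [hx₂def, norm_smul, hcK, hcdef, inv_mul_cancel₀ (ne_of_gt hw₂_pos)]
  have hx₁_norm : ‖x₁‖ = c * ‖w₁‖ := by
    rw [hx₁def, norm_smul, hcK]
  have hx₁_ge : 1 ≤ ‖x₁‖ := by
    rw [hx₁_norm]
    calc (1:ℝ) = c * ‖w₂‖ := by rw [hcdef, inv_mul_cancel₀ (ne_of_gt hw₂_pos)]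
    _ ≤ c * ‖w₁‖ := mul_le_mul_of_nonneg_left hw₂_le (le_of_lt hc_pos)
  refine ⟨x₁, x₂, by rw [hx₂_norm], by rw [hx₂_norm]; exact hx₁_ge, ?_⟩
  -- the disk bound
  have hball : ∀ α β : 𝕂, ‖α‖^2 + ‖β‖^2 = 1 → ‖α • x₁ + β • x₂‖ ≤ ‖x₁‖ := by
    intro α β hαβ
    have hexp : α • x₁ + β • x₂
        = ((c:ℝ):𝕂) • ((α*α₀ - β*(starRingEnd 𝕂 β₀)) • u + (α*β₀ + β*(starRingEnd 𝕂 α₀)) • v) := by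
      rw [hx₁def, hx₂def, hw₁def, hw₂def]
      simp only [smul_add, smul_smul, sub_smul, add_smul, neg_smul, smul_neg]
      module
    have hmem : ((α*α₀ - β*(starRingEnd 𝕂 β₀), α*β₀ + β*(starRingEnd 𝕂 α₀)) : 𝕂 × 𝕂) ∈ S := by
      simp only [hSdef, Set.mem_setOf_eq]
      rw [rot, hαβ, hp₀]; ring
    calc ‖α • x₁ + β • x₂‖
        = c * ‖(α*α₀ - β*(starRingEnd 𝕂 β₀)) • u + (α*β₀ + β*(starRingEnd 𝕂 α₀)) • v‖ := by
          rw [hexp, norm_smul, hcK]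
      _ ≤ c * ‖w₁‖ := mul_le_mul_of_nonneg_left (hmax' _ hmem) (le_of_lt hc_pos)
      _ = ‖x₁‖ := hx₁_norm.symm
  -- the quadratic bound
  have hquad : ∀ φ : E →L[𝕂] 𝕂, ‖φ‖ ≤ 1 → ‖φ x₁‖^2 + ‖φ x₂‖^2 ≤ ‖x₁‖^2 := by
    intro φ hφ
    by_cases h0 : ‖φ x₁‖^2 + ‖φ x₂‖^2 = 0
    · rw [h0]; positivity
    have hr2 : 0 < ‖φ x₁‖^2 + ‖φ x₂‖^2 := lt_of_le_of_ne (by positivity) (Ne.symm h0)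
    set r : ℝ := Real.sqrt (‖φ x₁‖^2 + ‖φ x₂‖^2) with hrdef
    have hr_pos : 0 < r := Real.sqrt_pos.2 hr2
    have hr_sq : r^2 = ‖φ x₁‖^2 + ‖φ x₂‖^2 := Real.sq_sqrt (le_of_lt hr2)
    have hrK : ‖((r:ℝ) : 𝕂)‖ = r := by
      rw [RCLike.norm_ofReal, abs_of_pos hr_pos]
    have hrne : ((r:ℝ):𝕂) ≠ 0 := by
      simp only [ne_eq, RCLike.ofReal_eq_zero]
      exact ne_of_gt hr_pos
    set α : 𝕂 := (starRingEnd 𝕂 (φ x₁)) / ((r:ℝ):𝕂) with hαdef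
    set β : 𝕂 := (starRingEnd 𝕂 (φ x₂)) / ((r:ℝ):𝕂) with hβdef
    have hαβ : ‖α‖^2 + ‖β‖^2 = 1 := by
      rw [hαdef, hβdef, norm_div, norm_div, RCLike.norm_conj, RCLike.norm_conj, hrK]
      rw [div_pow, div_pow, ← add_div, ← hr_sq, div_self (by positivity)]
    have hval : φ (α • x₁ + β • x₂) = ((r:ℝ) : 𝕂) := by
      have h' : φ (α • x₁ + β • x₂) = α * φ x₁ + β * φ x₂ := by
        simp only [map_add, ContinuousLinearMap.map_smul, smul_eq_mul]
      rw [h', hαdef, hβdef]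
      exact scal (φ x₁) (φ x₂) r hr_sq hrne
    have hle : r ≤ ‖x₁‖ := by
      calc r = ‖φ (α • x₁ + β • x₂)‖ := by rw [hval, hrK]
        _ ≤ ‖φ‖ * ‖α • x₁ + β • x₂‖ := φ.le_opNorm _
        _ ≤ 1 * ‖x₁‖ := mul_le_mul hφ (hball α β hαβ) (norm_nonneg _) zero_le_one
        _ = ‖x₁‖ := one_mul _
    calc ‖φ x₁‖^2 + ‖φ x₂‖^2 = r^2 := hr_sq.symm
      _ ≤ ‖x₁‖^2 := by nlinarith [hr_pos]
  -- the power bound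
  have hpow : ∀ φ : E →L[𝕂] 𝕂, ‖φ‖ ≤ 1 → ‖φ x₁‖^n + ‖φ x₂‖^n ≤ ‖x₁‖^n := by
    intro φ hφ
    refine pow_ineq (norm_nonneg _) (norm_nonneg _) ?_ hx₁_ge (hquad φ hφ) hn
    calc ‖φ x₂‖ ≤ ‖φ‖ * ‖x₂‖ := φ.le_opNorm _
      _ ≤ 1 * 1 := by rw [hx₂_norm]; exact mul_le_mul_of_nonneg_right hφ zero_le_one
      _ = 1 := one_mul 1
  -- compute the sSup
  have hx₁_ne : x₁ ≠ 0 := by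
    intro h; rw [h, norm_zero] at hx₁_ge; linarith
  obtain ⟨g, hg_norm, hg_val⟩ := exists_dual_vector 𝕂 x₁ (norm_ne_zero_iff.mpr hx₁_ne)
  have hg_mem : (‖g x₁‖^n + ‖g x₂‖^n : ℝ) ∈
      {s : ℝ | ∃ φ : E →L[𝕂] 𝕂, ‖φ‖ ≤ 1 ∧ s = ‖φ x₁‖ ^ n + ‖φ x₂‖ ^ n} :=
    ⟨g, le_of_eq hg_norm, rfl⟩
  have hgx₁ : ‖g x₁‖ = ‖x₁‖ := by
    rw [hg_val, RCLike.norm_ofReal, abs_of_nonneg (norm_nonneg _)]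
  have hbdd : BddAbove {s : ℝ | ∃ φ : E →L[𝕂] 𝕂, ‖φ‖ ≤ 1 ∧ s = ‖φ x₁‖ ^ n + ‖φ x₂‖ ^ n} := by
    refine ⟨‖x₁‖^n, ?_⟩
    rintro s ⟨φ, hφ, rfl⟩
    exact hpow φ hφ
  apply le_antisymm
  · apply csSup_le ⟨_, hg_mem⟩
    rintro s ⟨φ, hφ, rfl⟩
    exact hpow φ hφ
  · calc ‖x₁‖^n = ‖g x₁‖^n := by rw [hgx₁]
      _ ≤ ‖g x₁‖^n + ‖g x₂‖^n := le_add_of_nonneg_right (by positivity)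
      _ ≤ sSup _ := le_csSup hbdd hg_mem
end

section
/- Let E be a complex normed space of dimension at least 2 and let n ≥ 2 be an integer. Then there exist vectors x₁, x₂ in E with x₂ ≠ 0 and ‖x₁‖ ≥ 1 such that sup{ |φ(x₁)|^n : φ ∈ E′, ‖φ‖ ≤ 1 } = ‖x₁‖^n, and for every ζ ∈ ℂ with |ζ| ≤ 1, sup{ |φ(x₁)^n + ζ · φ(x₂)^n| : φ ∈ E′, ‖φ‖ ≤ 1 } ≤ ‖x₁‖^n. (In the language of the paper, the norm-one tensor u = x₁⊗⋯⊗x₁ / ‖x₁‖^n fails to be a complex extreme point of the unit ball of the n-fold symmetric injective tensor product of E; hence that space, and the space 𝒫(ⁿE) of continuous n-homogeneous polynomials, are not complex strictly convex.) -/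
open scoped ComplexConjugate InnerProductSpace

set_option maxHeartbeats 1000000 in
/-- Theorem 2, complex case. If `E` is a complex normed space of
dimension at least `2` and `n ≥ 2`, then there exist `x₁, x₂ ∈ E` with `x₂ ≠ 0`
and `‖x₁‖ ≥ 1` such that `sup { |φ(x₁)|^n : φ ∈ B_{E′} } = ‖x₁‖^n` and for every
`ζ ∈ ℂ` with `|ζ| ≤ 1`, `sup { |φ(x₁)^n + ζ·φ(x₂)^n| : φ ∈ B_{E′} } ≤ ‖x₁‖^n`.
(That is, `x₁⊗⋯⊗x₁ / ‖x₁‖^n` is a norm-one tensor that is not a complex extreme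
point of the unit ball of the `n`-fold symmetric injective tensor product, so that
space and `𝒫(ⁿE)` are not complex strictly convex.) -/
theorem stmt_4 {E : Type*} [NormedAddCommGroup E] [NormedSpace ℂ E]
    (hdim : 2 ≤ Module.rank ℂ E) {n : ℕ} (hn : 2 ≤ n) :
    ∃ x₁ x₂ : E, x₂ ≠ 0 ∧ 1 ≤ ‖x₁‖ ∧
      sSup {s : ℝ | ∃ φ : E →L[ℂ] ℂ, ‖φ‖ ≤ 1 ∧ s = ‖φ x₁‖ ^ n} = ‖x₁‖ ^ n ∧
      ∀ ζ : ℂ, ‖ζ‖ ≤ 1 →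
        sSup {s : ℝ | ∃ φ : E →L[ℂ] ℂ, ‖φ‖ ≤ 1 ∧
          s = ‖(φ x₁) ^ n + ζ * (φ x₂) ^ n‖} ≤ ‖x₁‖ ^ n := by
  classical
  obtain ⟨f, hf⟩ := exists_linearIndependent_of_le_rank (R := ℂ) (M := E)
    (n := 2) (by exact_mod_cast hdim)
  let S : EuclideanSpace ℂ (Fin 2) →ₗ[ℂ] E :=
    { toFun := fun v => v 0 • f 0 + v 1 • f 1
      map_add' := fun v w => by
        show (v + w) 0 • f 0 + (v + w) 1 • f 1 = _
        simp only [PiLp.add_apply, add_smul]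
        abel
      map_smul' := fun c v => by
        show (c • v) 0 • f 0 + (c • v) 1 • f 1 = _
        simp only [PiLp.smul_apply, smul_eq_mul, mul_smul, RingHom.id_apply, smul_add] }
  have hScont : Continuous S := S.continuous_of_finiteDimensional
  have hsph : IsCompact (Metric.sphere (0 : EuclideanSpace ℂ (Fin 2)) 1) := isCompact_sphere 0 1
  have hne : (Metric.sphere (0 : EuclideanSpace ℂ (Fin 2)) 1).Nonempty :=
    ⟨EuclideanSpace.single 0 (1 : ℂ), by
      simp [mem_sphere_zero_iff_norm, EuclideanSpace.norm_single]⟩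
  obtain ⟨u₀, hu₀mem, hu₀max⟩ := hsph.exists_isMaxOn hne
    ((continuous_norm.comp hScont)).continuousOn
  have hu₀ : ‖u₀‖ = 1 := mem_sphere_zero_iff_norm.mp hu₀mem
  set M := ‖S u₀‖ with hM
  have hMpos : 0 < M := by
    have h1 : S (EuclideanSpace.single 0 (1 : ℂ)) = f 0 := by
      show (EuclideanSpace.single 0 (1:ℂ)) 0 • f 0 + (EuclideanSpace.single 0 (1:ℂ)) 1 • f 1 = f 0
      simp [EuclideanSpace.single_apply]
    have h2 := hu₀max hne.choose_spec
    have h3 : ‖S (EuclideanSpace.single 0 (1:ℂ))‖ ≤ M :=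
      hu₀max (by simp [mem_sphere_zero_iff_norm, EuclideanSpace.norm_single])
    have h4 : (0:ℝ) < ‖f 0‖ := norm_pos_iff.mpr (hf.ne_zero 0)
    rw [h1] at h3
    linarith
  have hball : ∀ v : EuclideanSpace ℂ (Fin 2), ‖v‖ ≤ 1 → ‖S v‖ ≤ M := by
    intro v hv
    rcases eq_or_ne v 0 with rfl | hv0
    · simpa using hMpos.le
    · have hnv : 0 < ‖v‖ := norm_pos_iff.mpr hv0
      have hmem : ((‖v‖ : ℂ))⁻¹ • v ∈ Metric.sphere (0 : EuclideanSpace ℂ (Fin 2)) 1 := by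
        rw [mem_sphere_zero_iff_norm, norm_smul, norm_inv, Complex.norm_real,
          Real.norm_eq_abs, abs_of_pos hnv, inv_mul_cancel₀ hnv.ne']
      have h2 := hu₀max hmem
      simp only [Set.mem_setOf_eq, Function.comp_apply, map_smul, norm_smul, norm_inv,
        Complex.norm_real, Real.norm_eq_abs, abs_of_pos hnv] at h2
      have h3 : ‖S v‖ = ‖v‖ * (‖v‖⁻¹ * ‖S v‖) := by field_simp
      rw [h3]
      calc ‖v‖ * (‖v‖⁻¹ * ‖S v‖) ≤ 1 * M :=
            mul_le_mul hv h2 (by positivity) zero_le_one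
        _ = M := one_mul M
  -- orthogonal unit vector
  let u₁ : EuclideanSpace ℂ (Fin 2) :=
    (WithLp.equiv 2 (Fin 2 → ℂ)).symm ![-(conj (u₀ 1)), conj (u₀ 0)]
  have hu₁0 : u₁ 0 = -(conj (u₀ 1)) := rfl
  have hu₁1 : u₁ 1 = conj (u₀ 0) := rfl
  have hu₀sum : ‖u₀ 0‖ ^ 2 + ‖u₀ 1‖ ^ 2 = 1 := by
    have h1 := hu₀
    rw [EuclideanSpace.norm_eq, Fin.sum_univ_two] at h1
    have hnn : (0:ℝ) ≤ ‖u₀ 0‖ ^ 2 + ‖u₀ 1‖ ^ 2 := by positivity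
    nlinarith [Real.sq_sqrt hnn]
  have hu₁norm : ‖u₁‖ = 1 := by
    rw [EuclideanSpace.norm_eq, Fin.sum_univ_two, hu₁0, hu₁1, norm_neg, RCLike.norm_conj,
      RCLike.norm_conj]
    rw [show ‖u₀ 1‖ ^ 2 + ‖u₀ 0‖ ^ 2 = 1 by linarith]
    exact Real.sqrt_one
  have hinner : ⟪u₀, u₁⟫_ℂ = 0 := by
    simp only [PiLp.inner_apply, RCLike.inner_apply, Fin.sum_univ_two, hu₁0, hu₁1]
    ring
  have hnorm_comb : ∀ α β : ℂ, ‖α • u₀ + β • u₁‖ ^ 2 = ‖α‖ ^ 2 + ‖β‖ ^ 2 := by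
    intro α β
    have hzero : ⟪α • u₀, β • u₁⟫_ℂ = 0 := by
      rw [inner_smul_left, inner_smul_right, hinner]; ring
    have h := norm_add_sq (𝕜 := ℂ) (α • u₀) (β • u₁)
    rw [hzero] at h
    simpa [norm_smul, hu₀, hu₁norm, mul_pow] using h
  set c : ℂ := ((M : ℝ) : ℂ)⁻¹ with hc
  have hcnorm : ‖c‖ = M⁻¹ := by
    rw [hc, norm_inv, Complex.norm_real, Real.norm_eq_abs, abs_of_pos hMpos]
  obtain ⟨x₁, hx₁def⟩ : ∃ x : E, x = c • S u₀ := ⟨_, rfl⟩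
  obtain ⟨x₂, hx₂def⟩ : ∃ x : E, x = c • S u₁ := ⟨_, rfl⟩
  have hx₁ : ‖x₁‖ = 1 := by
    rw [hx₁def, norm_smul, hcnorm, ← hM, inv_mul_cancel₀ hMpos.ne']
  have hx₂ : x₂ ≠ 0 := by
    intro h
    have hcne : c ≠ 0 := by
      rw [hc]
      simp [hMpos.ne']
    have hSu₁ : S u₁ = 0 := by
      rcases smul_eq_zero.mp (hx₂def ▸ h) with h' | h'
      · exact absurd h' hcne
      · exact h'
    have hsum : ∑ i : Fin 2, u₁ i • f i = 0 := by
      rw [Fin.sum_univ_two]; exact hSu₁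
    have hco := Fintype.linearIndependent_iff.mp hf (fun i => u₁ i) hsum
    have h0 : u₁ 0 = 0 := hco 0
    have h1 : u₁ 1 = 0 := hco 1
    have : ‖u₁‖ = 0 := by
      rw [EuclideanSpace.norm_eq, Fin.sum_univ_two, h0, h1]
      simp
    rw [hu₁norm] at this
    norm_num at this
  have hkey : ∀ α β : ℂ, ‖α‖ ^ 2 + ‖β‖ ^ 2 ≤ 1 → ‖α • x₁ + β • x₂‖ ≤ 1 := by
    intro α β hαβ
    have hrw : α • x₁ + β • x₂ = c • S (α • u₀ + β • u₁) := by
      rw [hx₁def, hx₂def, map_add, map_smul, map_smul, smul_add, smul_comm α c, smul_comm β c]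
    rw [hrw, norm_smul, hcnorm]
    have h1 : ‖α • u₀ + β • u₁‖ ≤ 1 := by
      nlinarith [hnorm_comb α β, norm_nonneg (α • u₀ + β • u₁)]
    have h2 := hball _ h1
    calc M⁻¹ * ‖S (α • u₀ + β • u₁)‖ ≤ M⁻¹ * M := by
          exact mul_le_mul_of_nonneg_left h2 (by positivity)
      _ = 1 := inv_mul_cancel₀ hMpos.ne'
  have hφ2 : ∀ φ : E →L[ℂ] ℂ, ‖φ‖ ≤ 1 → ‖φ x₁‖ ^ 2 + ‖φ x₂‖ ^ 2 ≤ 1 := by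
    intro φ hφ
    by_cases hz : ‖φ x₁‖ ^ 2 + ‖φ x₂‖ ^ 2 = 0
    · rw [hz]; exact zero_le_one
    set a := φ x₁ with ha
    set b := φ x₂ with hb
    set r := Real.sqrt (‖a‖ ^ 2 + ‖b‖ ^ 2) with hr
    have hrpos : 0 < r := Real.sqrt_pos.mpr (lt_of_le_of_ne (by positivity) (Ne.symm hz))
    have hr2 : r ^ 2 = ‖a‖ ^ 2 + ‖b‖ ^ 2 := Real.sq_sqrt (by positivity)
    set α := conj a / (r : ℂ) with hα
    set β := conj b / (r : ℂ) with hβ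
    have hrne : ((r : ℝ) : ℂ) ≠ 0 := by
      exact_mod_cast Complex.ofReal_ne_zero.mpr hrpos.ne'
    have hαβ : ‖α‖ ^ 2 + ‖β‖ ^ 2 = 1 := by
      rw [hα, hβ, norm_div, norm_div, RCLike.norm_conj, RCLike.norm_conj, Complex.norm_real,
        Real.norm_eq_abs, abs_of_pos hrpos, div_pow, div_pow, ← add_div, hr2.symm]
      rw [div_self (by positivity)]
    have hconj_a : conj a * a = ((‖a‖ ^ 2 : ℝ) : ℂ) := by
      rw [mul_comm, Complex.mul_conj, Complex.normSq_eq_norm_sq]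
    have hconj_b : conj b * b = ((‖b‖ ^ 2 : ℝ) : ℂ) := by
      rw [mul_comm, Complex.mul_conj, Complex.normSq_eq_norm_sq]
    have happ : φ (α • x₁ + β • x₂) = (r : ℂ) := by
      have e1 : φ (α • x₁ + β • x₂) = α * (φ x₁) + β * (φ x₂) := by
        simp [map_add, map_smul, smul_eq_mul]
      rw [e1, ← ha, ← hb, hα, hβ, div_mul_eq_mul_div, div_mul_eq_mul_div, ← add_div,
        hconj_a, hconj_b, ← Complex.ofReal_add, ← hr2, div_eq_iff hrne]
      push_cast; ring
    have hrle : r ≤ 1 := by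
      have h1 := hkey α β (le_of_eq hαβ)
      have h2 : r = ‖φ (α • x₁ + β • x₂)‖ := by
        rw [happ, Complex.norm_real, Real.norm_eq_abs, abs_of_pos hrpos]
      have h3 := φ.le_opNorm (α • x₁ + β • x₂)
      rw [← h2] at h3
      nlinarith [norm_nonneg (α • x₁ + β • x₂)]
    nlinarith [hr2]
  have hone : ‖x₁‖ ^ n = 1 := by rw [hx₁, one_pow]
  have hub : ∀ φ : E →L[ℂ] ℂ, ‖φ‖ ≤ 1 → ‖φ x₁‖ ≤ 1 := by
    intro φ hφ
    calc ‖φ x₁‖ ≤ ‖φ‖ * ‖x₁‖ := φ.le_opNorm x₁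
      _ ≤ 1 := by rw [hx₁]; simpa using hφ
  refine ⟨x₁, x₂, hx₂, le_of_eq hx₁.symm, ?_, ?_⟩
  · apply le_antisymm
    · apply Real.sSup_le
      · rintro s ⟨φ, hφ, rfl⟩
        rw [hone]
        exact pow_le_one₀ (norm_nonneg _) (hub φ hφ)
      · positivity
    · have hx₁ne : x₁ ≠ 0 := by
        intro h; rw [h, norm_zero] at hx₁; norm_num at hx₁
      obtain ⟨g, hg1, hgx⟩ := exists_dual_vector ℂ x₁ (norm_ne_zero_iff.mpr hx₁ne)
      apply le_csSup
      · refine ⟨1, ?_⟩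
        rintro s ⟨φ, hφ, rfl⟩
        exact pow_le_one₀ (norm_nonneg _) (hub φ hφ)
      · refine ⟨g, le_of_eq hg1, ?_⟩
        rw [hgx, RCLike.norm_ofReal, abs_of_nonneg (norm_nonneg x₁)]
  · intro ζ hζ
    apply Real.sSup_le
    · rintro s ⟨φ, hφ, rfl⟩
      have h2 := hφ2 φ hφ
      have ha1 : ‖φ x₁‖ ≤ 1 := by nlinarith [norm_nonneg (φ x₁), norm_nonneg (φ x₂)]
      have hb1 : ‖φ x₂‖ ≤ 1 := by nlinarith [norm_nonneg (φ x₁), norm_nonneg (φ x₂)]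
      have han : ‖φ x₁‖ ^ n ≤ ‖φ x₁‖ ^ 2 := pow_le_pow_of_le_one (norm_nonneg _) ha1 hn
      have hbn : ‖φ x₂‖ ^ n ≤ ‖φ x₂‖ ^ 2 := pow_le_pow_of_le_one (norm_nonneg _) hb1 hn
      calc ‖φ x₁ ^ n + ζ * φ x₂ ^ n‖ ≤ ‖φ x₁ ^ n‖ + ‖ζ * φ x₂ ^ n‖ := norm_add_le _ _
        _ = ‖φ x₁‖ ^ n + ‖ζ‖ * ‖φ x₂‖ ^ n := by rw [norm_pow, norm_mul, norm_pow]
        _ ≤ ‖φ x₁‖ ^ 2 + ‖φ x₂‖ ^ 2 := by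
            have : ‖ζ‖ * ‖φ x₂‖ ^ n ≤ ‖φ x₂‖ ^ n := by
              nlinarith [pow_nonneg (norm_nonneg (φ x₂)) n, norm_nonneg ζ]
            linarith
        _ ≤ 1 := h2
        _ = ‖x₁‖ ^ n := hone.symm
    · positivity
end

section
/- Let E be a real normed space of dimension at least 2 and let n ≥ 2 be an integer. Then there exist vectors x₁, x₂ in E with x₂ ≠ 0 and ‖x₁‖ ≥ 1 such that sup{ |φ(x₁)|^n : φ ∈ E′, ‖φ‖ ≤ 1 } = ‖x₁‖^n, and for every real t with |t| ≤ 1, sup{ |φ(x₁)^n + t · φ(x₂)^n| : φ ∈ E′, ‖φ‖ ≤ 1 } ≤ ‖x₁‖^n. (In the language of the paper, the norm-one tensor u = x₁⊗⋯⊗x₁ / ‖x₁‖^n fails to be an extreme point of the unit ball of the n-fold symmetric injective tensor product of E; hence that space, and the space 𝒫(ⁿE) of continuous n-homogeneous polynomials, are not strictly convex.) -/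
set_option maxHeartbeats 1000000 in
/-- Theorem 2, real case. If `E` is a real normed space of dimension
at least `2` and `n ≥ 2`, then there exist `x₁, x₂ ∈ E` with `x₂ ≠ 0` and
`‖x₁‖ ≥ 1` such that `sup { |φ(x₁)|^n : φ ∈ B_{E′} } = ‖x₁‖^n` and for every real
`t` with `|t| ≤ 1`, `sup { |φ(x₁)^n + t·φ(x₂)^n| : φ ∈ B_{E′} } ≤ ‖x₁‖^n`.
(That is, `x₁⊗⋯⊗x₁ / ‖x₁‖^n` is a norm-one tensor that is not an extreme point of
the unit ball of the `n`-fold symmetric injective tensor product, so that space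
and `𝒫(ⁿE)` are not strictly convex.) -/
theorem stmt_5 {E : Type*} [NormedAddCommGroup E] [NormedSpace ℝ E]
    (hdim : 2 ≤ Module.rank ℝ E) {n : ℕ} (hn : 2 ≤ n) :
    ∃ x₁ x₂ : E, x₂ ≠ 0 ∧ 1 ≤ ‖x₁‖ ∧
      sSup {s : ℝ | ∃ φ : E →L[ℝ] ℝ, ‖φ‖ ≤ 1 ∧ s = |φ x₁| ^ n} = ‖x₁‖ ^ n ∧
      ∀ t : ℝ, |t| ≤ 1 →
        sSup {s : ℝ | ∃ φ : E →L[ℝ] ℝ, ‖φ‖ ≤ 1 ∧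
          s = |(φ x₁) ^ n + t * (φ x₂) ^ n|} ≤ ‖x₁‖ ^ n := by
  -- obtain a linearly independent pair
  have h1 : (1 : Cardinal) < Module.rank ℝ E := lt_of_lt_of_le (by norm_num) hdim
  obtain ⟨e₁, he₁⟩ := rank_pos_iff_exists_ne_zero.mp (lt_trans (by norm_num) h1)
  obtain ⟨e₂, hind⟩ := exists_linearIndependent_pair_of_one_lt_rank h1 he₁
  -- the image of the dual unit ball in ℝ²
  set S : Set (ℝ × ℝ) := {y | ∃ φ : E →L[ℝ] ℝ, ‖φ‖ ≤ 1 ∧ y = (φ e₁, φ e₂)} with hSdef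
  have hS0 : (0, 0) ∈ S := ⟨0, by simp⟩
  have hSb : Bornology.IsBounded S := by
    apply Bornology.IsBounded.subset (Metric.isBounded_closedBall (x := (0:ℝ×ℝ))
      (r := ‖e₁‖ + ‖e₂‖))
    rintro y ⟨φ, hφ, rfl⟩
    have h1 : ‖φ e₁‖ ≤ ‖e₁‖ := by
      calc ‖φ e₁‖ ≤ ‖φ‖ * ‖e₁‖ := φ.le_opNorm e₁
        _ ≤ 1 * ‖e₁‖ := by have := norm_nonneg e₁; nlinarith
        _ = ‖e₁‖ := one_mul _
    have h2 : ‖φ e₂‖ ≤ ‖e₂‖ := by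
      calc ‖φ e₂‖ ≤ ‖φ‖ * ‖e₂‖ := φ.le_opNorm e₂
        _ ≤ 1 * ‖e₂‖ := by have := norm_nonneg e₂; nlinarith
        _ = ‖e₂‖ := one_mul _
    simp only [Metric.mem_closedBall, Prod.dist_eq, dist_zero_right]
    have := norm_nonneg e₁; have := norm_nonneg e₂
    exact max_le (by simpa using h1.trans (by linarith)) (by simpa using h2.trans (by linarith))
  have hcomp : IsCompact (closure S) :=
    Metric.isCompact_of_isClosed_isBounded isClosed_closure hSb.closure
  have hfc : Continuous fun y : ℝ × ℝ => y.1 ^ 2 + y.2 ^ 2 := by fun_prop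
  obtain ⟨z, hz, hzmax⟩ := hcomp.exists_isMaxOn ⟨(0,0), subset_closure hS0⟩
    hfc.continuousOn
  set p : ℝ := z.1
  set q : ℝ := z.2
  set M : ℝ := p ^ 2 + q ^ 2 with hMdef
  -- M is positive
  obtain ⟨g, hgnorm, hge₁⟩ := exists_dual_vector ℝ e₁ (norm_ne_zero_iff.mpr he₁)
  have hge₁' : g e₁ = ‖e₁‖ := hge₁
  have hMg : (g e₁) ^ 2 + (g e₂) ^ 2 ≤ M :=
    hzmax (subset_closure ⟨g, le_of_eq hgnorm, rfl⟩)
  have hM : 0 < M := by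
    have he₁n : 0 < ‖e₁‖ := norm_pos_iff.mpr he₁
    nlinarith [sq_nonneg (g e₂)]
  -- the two vectors
  set x₁ : E := (p / M) • e₁ + (q / M) • e₂ with hx₁def
  set x₂ : E := (-q / M) • e₁ + (p / M) • e₂ with hx₂def
  -- values of a functional on x₁, x₂
  have hval₁ : ∀ φ : E →L[ℝ] ℝ, φ x₁ = (p * φ e₁ + q * φ e₂) / M := by
    intro φ
    simp only [hx₁def, map_add, map_smul, smul_eq_mul]
    ring
  have hval₂ : ∀ φ : E →L[ℝ] ℝ, φ x₂ = (-q * φ e₁ + p * φ e₂) / M := by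
    intro φ
    simp only [hx₂def, map_add, map_smul, smul_eq_mul]
    ring
  -- key inequality
  have key : ∀ φ : E →L[ℝ] ℝ, ‖φ‖ ≤ 1 → (φ x₁) ^ 2 + (φ x₂) ^ 2 ≤ 1 := by
    intro φ hφ
    have hab : (φ e₁) ^ 2 + (φ e₂) ^ 2 ≤ M :=
      hzmax (subset_closure ⟨φ, hφ, rfl⟩)
    rw [hval₁ φ, hval₂ φ]
    have expand : ((p * φ e₁ + q * φ e₂) / M) ^ 2 + ((-q * φ e₁ + p * φ e₂) / M) ^ 2
        = ((p ^ 2 + q ^ 2) * ((φ e₁) ^ 2 + (φ e₂) ^ 2)) / M ^ 2 := by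
      field_simp
      ring
    rw [expand, div_le_one (by positivity), ← hMdef]
    nlinarith
  -- each functional in the ball is bounded on x₁
  have hbd : ∀ φ : E →L[ℝ] ℝ, ‖φ‖ ≤ 1 → |φ x₁| ≤ ‖x₁‖ := by
    intro φ hφ
    calc |φ x₁| = ‖φ x₁‖ := rfl
      _ ≤ ‖φ‖ * ‖x₁‖ := φ.le_opNorm x₁
      _ ≤ 1 * ‖x₁‖ := by have := norm_nonneg x₁; nlinarith
      _ = ‖x₁‖ := one_mul _
  -- norm of x₁ is at least 1
  have hx₁norm : 1 ≤ ‖x₁‖ := by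
    apply le_of_forall_pos_le_add
    intro ε hε
    have hδ : 0 < ε * M / (|p| + |q| + 1) := by positivity
    obtain ⟨y, hyS, hyd⟩ := Metric.mem_closure_iff.mp hz _ hδ
    obtain ⟨φ, hφ, rfl⟩ := hyS
    have hd1 : |p - φ e₁| < ε * M / (|p| + |q| + 1) := by
      have := le_max_left (dist z.1 (φ e₁, φ e₂).1) (dist z.2 (φ e₁, φ e₂).2)
      rw [← Prod.dist_eq] at this
      calc |p - φ e₁| = dist z.1 (φ e₁, φ e₂).1 := by rw [Real.dist_eq]
        _ ≤ _ := this
        _ < _ := hyd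
    have hd2 : |q - φ e₂| < ε * M / (|p| + |q| + 1) := by
      have := le_max_right (dist z.1 (φ e₁, φ e₂).1) (dist z.2 (φ e₁, φ e₂).2)
      rw [← Prod.dist_eq] at this
      calc |q - φ e₂| = dist z.2 (φ e₁, φ e₂).2 := by rw [Real.dist_eq]
        _ ≤ _ := this
        _ < _ := hyd
    have hφx₁ : φ x₁ = (p * φ e₁ + q * φ e₂) / M := hval₁ φ
    have h1 : 1 - ε ≤ φ x₁ := by
      rw [hφx₁, le_div_iff₀ hM]
      have e1 : p * φ e₁ = p ^ 2 - p * (p - φ e₁) := by ring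
      have e2 : q * φ e₂ = q ^ 2 - q * (q - φ e₂) := by ring
      have hp1 : p * (p - φ e₁) ≤ |p| * (ε * M / (|p| + |q| + 1)) := by
        calc p * (p - φ e₁) ≤ |p * (p - φ e₁)| := le_abs_self _
          _ = |p| * |p - φ e₁| := abs_mul _ _
          _ ≤ |p| * (ε * M / (|p| + |q| + 1)) := by
              apply mul_le_mul_of_nonneg_left (le_of_lt hd1) (abs_nonneg _)
      have hq1 : q * (q - φ e₂) ≤ |q| * (ε * M / (|p| + |q| + 1)) := by
        calc q * (q - φ e₂) ≤ |q * (q - φ e₂)| := le_abs_self _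
          _ = |q| * |q - φ e₂| := abs_mul _ _
          _ ≤ |q| * (ε * M / (|p| + |q| + 1)) := by
              apply mul_le_mul_of_nonneg_left (le_of_lt hd2) (abs_nonneg _)
      have hsum : (|p| + |q|) * (ε * M / (|p| + |q| + 1)) ≤ ε * M := by
        rw [mul_div_assoc', div_le_iff₀ (by positivity)]
        have hεM : 0 ≤ ε * M := by positivity
        nlinarith [abs_nonneg p, abs_nonneg q]
      calc (1 - ε) * M = M - ε * M := by ring
        _ ≤ M - (|p| + |q|) * (ε * M / (|p| + |q| + 1)) := by linarith
        _ ≤ p ^ 2 + q ^ 2 - (p * (p - φ e₁) + q * (q - φ e₂)) := by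
            rw [hMdef]; nlinarith
        _ = p * φ e₁ + q * φ e₂ := by ring
    have h2 : φ x₁ ≤ ‖x₁‖ := (le_abs_self _).trans (hbd φ hφ)
    linarith
  refine ⟨x₁, x₂, ?_, hx₁norm, ?_, ?_⟩
  · -- x₂ ≠ 0
    intro hx₂0
    have := (LinearIndependent.pair_iff.mp hind) (-q / M) (p / M) (by rw [← hx₂def]; exact hx₂0)
    have hq0 : q = 0 := by
      have := this.1
      field_simp at this
      simpa using this
    have hp0 : p = 0 := by
      have := this.2
      field_simp at this
      simpa using this
    rw [hMdef, hp0, hq0] at hM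
    norm_num at hM
  · -- first sSup
    have hx₁ne : x₁ ≠ 0 := by
      intro h
      rw [h, norm_zero] at hx₁norm
      linarith
    obtain ⟨g₁, hg₁norm, hg₁x⟩ := exists_dual_vector ℝ x₁ (norm_ne_zero_iff.mpr hx₁ne)
    have hg₁x' : g₁ x₁ = ‖x₁‖ := hg₁x
    have hub : ∀ s ∈ {s : ℝ | ∃ φ : E →L[ℝ] ℝ, ‖φ‖ ≤ 1 ∧ s = |φ x₁| ^ n}, s ≤ ‖x₁‖ ^ n := by
      rintro s ⟨φ, hφ, rfl⟩
      exact pow_le_pow_left₀ (abs_nonneg _) (hbd φ hφ) n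
    have hmem : ‖x₁‖ ^ n ∈ {s : ℝ | ∃ φ : E →L[ℝ] ℝ, ‖φ‖ ≤ 1 ∧ s = |φ x₁| ^ n} :=
      ⟨g₁, le_of_eq hg₁norm, by rw [hg₁x', abs_of_nonneg (norm_nonneg _)]⟩
    exact le_antisymm (csSup_le ⟨_, hmem⟩ hub) (le_csSup ⟨‖x₁‖ ^ n, hub⟩ hmem)
  · -- second sup
    intro t ht
    apply csSup_le
    · refine ⟨0, 0, ?_, ?_⟩
      · simp
      · rw [ContinuousLinearMap.zero_apply, ContinuousLinearMap.zero_apply,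
          zero_pow (show n ≠ 0 by omega), mul_zero, add_zero, abs_zero]
    rintro s ⟨φ, hφ, rfl⟩
    have hk := key φ hφ
    set a : ℝ := φ x₁
    set b : ℝ := φ x₂
    have ha1 : |a| ≤ 1 := by
      rw [abs_le]; constructor <;> nlinarith [sq_nonneg b]
    have hb1 : |b| ≤ 1 := by
      rw [abs_le]; constructor <;> nlinarith [sq_nonneg a]
    have han : |a| ^ n ≤ a ^ 2 := by
      calc |a| ^ n ≤ |a| ^ 2 := pow_le_pow_of_le_one (abs_nonneg _) ha1 hn
        _ = a ^ 2 := sq_abs a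
    have hbn : |b| ^ n ≤ b ^ 2 := by
      calc |b| ^ n ≤ |b| ^ 2 := pow_le_pow_of_le_one (abs_nonneg _) hb1 hn
        _ = b ^ 2 := sq_abs b
    have h1n : (1 : ℝ) ≤ ‖x₁‖ ^ n := by
      calc (1 : ℝ) = 1 ^ n := (one_pow n).symm
        _ ≤ ‖x₁‖ ^ n := pow_le_pow_left₀ zero_le_one hx₁norm n
    calc |a ^ n + t * b ^ n| ≤ |a ^ n| + |t * b ^ n| := abs_add_le _ _
      _ = |a| ^ n + |t| * |b| ^ n := by rw [abs_pow, abs_mul, abs_pow]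
      _ ≤ |a| ^ n + 1 * |b| ^ n := by
          have : (0:ℝ) ≤ |b| ^ n := by positivity
          nlinarith
      _ = |a| ^ n + |b| ^ n := by ring
      _ ≤ a ^ 2 + b ^ 2 := add_le_add han hbn
      _ ≤ 1 := hk
      _ ≤ ‖x₁‖ ^ n := h1n
end
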